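/- Let s₁, s₀, r₁, r₀, a₃, a₂, a₁, a₀ ∈ ℝ with s₁ ≠ 0 and ω := r₁s₀ − r₀s₁ ≠ 0. Define k₀ = ((a₂r₀² + (s₀a₀ − a₁r₀)s₀)s₀ − a₃r₀³)s₁²/ω², k₁ = ((a₂s₁ − 3a₃r₁)r₀² + ((2r₁a₂ − 2a₁s₁)r₀ + (3a₀s₁ − a₁r₁)s₀)s₀)/ω², k₂ = (((2a₂s₁ − 3a₃r₁)r₁ − a₁s₁²)r₀ + (3s₁²a₀ + (r₁a₂ − 2a₁s₁)r₁)s₀)/(s₁²ω²), k₃ = (a₀s₁³ + ((a₂s₁ − a₃r₁)r₁ − a₁s₁²)r₁)/(s₁⁴ω²). Let y : ℝ → ℝ, t₀ ∈ ℝ, set x₀ = −t₀/s₁², Y = y(x₀), and suppose s₁·Y + r₁ ≠ 0, (s₁x₀ + s₀)Y + r₁x₀ + r₀ ≠ 0, and y has derivative −(a₃Y³ + a₂Y² + a₁Y + a₀)/((s₁x₀ + s₀)Y + r₁x₀ + r₀) at x₀. Define u(t) = −s₁²·(r₀ + s₀·y(−t/s₁²))/(s₁·y(−t/s₁²) + r₁).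 Then u(t₀) + t₀ ≠ 0 implies u has derivative (k₃u(t₀)³ + k₂u(t₀)² + k₁u(t₀) + k₀)/(u(t₀) + t₀) at t₀. Hence the 8-parameter AIL equation is transformed into the 4-parameter canonical form u' = (k₃u³ + k₂u² + k₁u + k₀)/(u + t). -/

import Mathlib

set_option maxHeartbeats 1000000

/-- The 8-parameter AIL equation
`y' = −(a₃y³ + a₂y² + a₁y + a₀)/((s₁x + s₀)y + r₁x + r₀)`
is transformed, by the change of variables `{x = −t/s₁², u = −s₁²(r₀ + s₀y)/(s₁y + r₁)}`
and the stated redefinition of the parameters `k₀, k₁, k₂, k₃`, into the 4-parameter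
canonical form `u' = (k₃u³ + k₂u² + k₁u + k₀)/(u + t)`. -/
theorem AIL8_to_AIL4
    (s₁ s₀ r₁ r₀ a₃ a₂ a₁ a₀ ω k₀ k₁ k₂ k₃ : ℝ)
    (hs₁ : s₁ ≠ 0) (hω : ω = r₁ * s₀ - r₀ * s₁) (hω0 : ω ≠ 0)
    (hk₀ : k₀ = ((a₂ * r₀ ^ 2 + (s₀ * a₀ - a₁ * r₀) * s₀) * s₀ - a₃ * r₀ ^ 3) * s₁ ^ 2 / ω ^ 2)
    (hk₁ : k₁ = ((a₂ * s₁ - 3 * a₃ * r₁) * r₀ ^ 2 +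
      ((2 * r₁ * a₂ - 2 * a₁ * s₁) * r₀ + (3 * a₀ * s₁ - a₁ * r₁) * s₀) * s₀) / ω ^ 2)
    (hk₂ : k₂ = (((2 * a₂ * s₁ - 3 * a₃ * r₁) * r₁ - a₁ * s₁ ^ 2) * r₀ +
      (3 * s₁ ^ 2 * a₀ + (r₁ * a₂ - 2 * a₁ * s₁) * r₁) * s₀) / (s₁ ^ 2 * ω ^ 2))
    (hk₃ : k₃ = (a₀ * s₁ ^ 3 + ((a₂ * s₁ - a₃ * r₁) * r₁ - a₁ * s₁ ^ 2) * r₁) / (s₁ ^ 4 * ω ^ 2))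
    (y : ℝ → ℝ) (t₀ x₀ Y : ℝ)
    (hx₀ : x₀ = -t₀ / s₁ ^ 2) (hY : Y = y x₀)
    (h1 : s₁ * Y + r₁ ≠ 0)
    (h2 : (s₁ * x₀ + s₀) * Y + r₁ * x₀ + r₀ ≠ 0)
    (hy : HasDerivAt y
      (-((a₃ * Y ^ 3 + a₂ * Y ^ 2 + a₁ * Y + a₀) /
        ((s₁ * x₀ + s₀) * Y + r₁ * x₀ + r₀))) x₀)
    (u : ℝ → ℝ)
    (hu : u = fun t => -s₁ ^ 2 * (r₀ + s₀ * y (-t / s₁ ^ 2)) / (s₁ * y (-t / s₁ ^ 2) + r₁))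
    (hden : u t₀ + t₀ ≠ 0) :
    HasDerivAt u
      ((k₃ * (u t₀) ^ 3 + k₂ * (u t₀) ^ 2 + k₁ * (u t₀) + k₀) / (u t₀ + t₀)) t₀ := by
  subst hu hx₀
  simp only at hden ⊢
  rw [← hY] at hden ⊢
  set D : ℝ := -((a₃ * Y ^ 3 + a₂ * Y ^ 2 + a₁ * Y + a₀) /
      ((s₁ * (-t₀ / s₁ ^ 2) + s₀) * Y + r₁ * (-t₀ / s₁ ^ 2) + r₀)) with hD
  have hg : HasDerivAt (fun t : ℝ => -t / s₁ ^ 2) (-1 / s₁ ^ 2) t₀ :=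
    (hasDerivAt_id t₀).neg.div_const (s₁ ^ 2)
  have hv : HasDerivAt (fun t : ℝ => y (-t / s₁ ^ 2)) (D * (-1 / s₁ ^ 2)) t₀ :=
    hy.comp t₀ hg
  have hY' : s₁ * y (-t₀ / s₁ ^ 2) + r₁ ≠ 0 := by rw [← hY]; exact h1
  have hq := (((hv.const_mul s₀).const_add r₀).const_mul (-s₁ ^ 2)).div
    ((hv.const_mul s₁).add_const r₁) hY'
  convert hq using 1
  case e'_4 => rfl
  case e'_5 => rfl
  case e'_8 => rfl
  rw [← hY]
  have hs2 : (s₁ : ℝ) ^ 2 ≠ 0 := pow_ne_zero 2 hs₁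
  -- notation
  have hsum : -s₁ ^ 2 * (r₀ + s₀ * Y) / (s₁ * Y + r₁) + t₀ =
      -(s₁ ^ 2 * (r₀ + s₀ * Y) - t₀ * (s₁ * Y + r₁)) / (s₁ * Y + r₁) := by
    field_simp; ring
  have hF : s₁ ^ 2 * (r₀ + s₀ * Y) - t₀ * (s₁ * Y + r₁) ≠ 0 := by
    intro h; apply hden; rw [hsum, h, neg_zero, zero_div]
  have hE' : (s₁ * (-t₀ / s₁ ^ 2) + s₀) * Y + r₁ * (-t₀ / s₁ ^ 2) + r₀ =
      (s₁ ^ 2 * (r₀ + s₀ * Y) - t₀ * (s₁ * Y + r₁)) / s₁ ^ 2 := by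
    field_simp; ring
  -- the cubic in u₀ collapses
  have e3 : k₃ * (-s₁ ^ 2 * (r₀ + s₀ * Y) / (s₁ * Y + r₁)) ^ 3 =
      (-((a₀ * s₁ ^ 3 + ((a₂ * s₁ - a₃ * r₁) * r₁ - a₁ * s₁ ^ 2) * r₁) *
        (r₀ + s₀ * Y) ^ 3) * s₁ ^ 2) / (ω ^ 2 * (s₁ * Y + r₁) ^ 3) := by
    rw [hk₃]; field_simp
  have e2 : k₂ * (-s₁ ^ 2 * (r₀ + s₀ * Y) / (s₁ * Y + r₁)) ^ 2 =
      (((((2 * a₂ * s₁ - 3 * a₃ * r₁) * r₁ - a₁ * s₁ ^ 2) * r₀ +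
        (3 * s₁ ^ 2 * a₀ + (r₁ * a₂ - 2 * a₁ * s₁) * r₁) * s₀) *
        (r₀ + s₀ * Y) ^ 2 * (s₁ * Y + r₁)) * s₁ ^ 2) / (ω ^ 2 * (s₁ * Y + r₁) ^ 3) := by
    rw [hk₂]; field_simp
  have e1 : k₁ * (-s₁ ^ 2 * (r₀ + s₀ * Y) / (s₁ * Y + r₁)) =
      (-(((a₂ * s₁ - 3 * a₃ * r₁) * r₀ ^ 2 +
        ((2 * r₁ * a₂ - 2 * a₁ * s₁) * r₀ + (3 * a₀ * s₁ - a₁ * r₁) * s₀) * s₀) *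
        (r₀ + s₀ * Y) * (s₁ * Y + r₁) ^ 2) * s₁ ^ 2) / (ω ^ 2 * (s₁ * Y + r₁) ^ 3) := by
    rw [hk₁]; field_simp
  have e0 : k₀ =
      ((((a₂ * r₀ ^ 2 + (s₀ * a₀ - a₁ * r₀) * s₀) * s₀ - a₃ * r₀ ^ 3) *
        (s₁ * Y + r₁) ^ 3) * s₁ ^ 2) / (ω ^ 2 * (s₁ * Y + r₁) ^ 3) := by
    rw [hk₀]; field_simp
  have hG : -((a₀ * s₁ ^ 3 + ((a₂ * s₁ - a₃ * r₁) * r₁ - a₁ * s₁ ^ 2) * r₁) *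
        (r₀ + s₀ * Y) ^ 3) * s₁ ^ 2 +
      ((((2 * a₂ * s₁ - 3 * a₃ * r₁) * r₁ - a₁ * s₁ ^ 2) * r₀ +
        (3 * s₁ ^ 2 * a₀ + (r₁ * a₂ - 2 * a₁ * s₁) * r₁) * s₀) *
        (r₀ + s₀ * Y) ^ 2 * (s₁ * Y + r₁)) * s₁ ^ 2 +
      -(((a₂ * s₁ - 3 * a₃ * r₁) * r₀ ^ 2 +
        ((2 * r₁ * a₂ - 2 * a₁ * s₁) * r₀ + (3 * a₀ * s₁ - a₁ * r₁) * s₀) * s₀) *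
        (r₀ + s₀ * Y) * (s₁ * Y + r₁) ^ 2) * s₁ ^ 2 +
      (((a₂ * r₀ ^ 2 + (s₀ * a₀ - a₁ * r₀) * s₀) * s₀ - a₃ * r₀ ^ 3) *
        (s₁ * Y + r₁) ^ 3) * s₁ ^ 2 =
      (a₃ * Y ^ 3 + a₂ * Y ^ 2 + a₁ * Y + a₀) * (r₁ * s₀ - r₀ * s₁) ^ 3 * s₁ ^ 2 := by
    ring
  have hω0' : (r₁ * s₀ - r₀ * s₁) ≠ 0 := by rw [← hω]; exact hω0
  have glue : ∀ p f d om s : ℝ, om ≠ 0 → d ≠ 0 → f ≠ 0 → s ≠ 0 →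
      p * om ^ 3 * s ^ 2 / (om ^ 2 * d ^ 3) / (-f / d) = -(p * om * s ^ 2) / (f * d ^ 2) := by
    intro p f d om s m1 m2 m3 m4; field_simp
  rw [e3, e2, e1, e0, ← add_div, ← add_div, ← add_div, hG, hsum, hω,
    glue _ _ _ _ _ hω0' h1 hF hs₁, hD, hE']
  field_simp
  ring
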